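/- Let N ∈ ℕ and h = L/(N+1) with L > 0. For every y : Fin (N+2) → ℝ with y(0) = y(N+1) = 0, the discrete Poincaré inequality holds: h·∑_{i=1}^{N} y(i)² ≤ C·h·∑_{i=1}^{N} (-Δ_h y)(i)·y(i), where Δ_h y(i) = (y(i+1) - 2y(i) + y(i-1))/h² and C > 0 depends only on L (not on N or h). Equivalently, h·∑_{i=1}^N y(i)² ≤ C·h·∑_{i=0}^{N} ((y(i+1)-y(i))/h)². -/

import Mathlib

open Finset

private lemma sbp (N : ℕ) (Y : ℕ → ℝ) (h0 : Y 0 = 0) (hN : Y (N + 1) = 0) :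
    ∑ k ∈ range N, (2 * Y (k + 1) - Y (k + 2) - Y k) * Y (k + 1)
      = ∑ j ∈ range (N + 1), (Y (j + 1) - Y j) ^ 2 := by
  have e1 : ∑ j ∈ range (N + 1), (Y (j + 1) - Y j) ^ 2
      = ∑ j ∈ range (N + 1), (Y (j + 1) - Y j) * Y (j + 1)
        - ∑ j ∈ range (N + 1), (Y (j + 1) - Y j) * Y j := by
    rw [← Finset.sum_sub_distrib]
    exact Finset.sum_congr rfl (fun j _ => by ring)
  rw [e1, Finset.sum_range_succ (fun j => (Y (j + 1) - Y j) * Y (j + 1)),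
    Finset.sum_range_succ' (fun j => (Y (j + 1) - Y j) * Y j)]
  rw [hN, h0]
  simp only [mul_zero, zero_mul, sub_zero, add_zero]
  rw [← Finset.sum_sub_distrib]
  exact Finset.sum_congr rfl (fun k _ => by ring)

private lemma poin (N : ℕ) (Y : ℕ → ℝ) (h0 : Y 0 = 0) :
    ∑ k ∈ range N, Y (k + 1) ^ 2
      ≤ (N + 1 : ℝ) ^ 2 * ∑ j ∈ range (N + 1), (Y (j + 1) - Y j) ^ 2 := by
  set S := ∑ j ∈ range (N + 1), (Y (j + 1) - Y j) ^ 2 with hS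
  have hSnn : 0 ≤ S := Finset.sum_nonneg fun j _ => sq_nonneg _
  have key : ∀ k ∈ range N, Y (k + 1) ^ 2 ≤ (N + 1 : ℝ) * S := by
    intro k hk
    have hk' : k < N := Finset.mem_range.mp hk
    have tel : Y (k + 1) = ∑ j ∈ range (k + 1), (Y (j + 1) - Y j) := by
      rw [Finset.sum_range_sub Y, h0, sub_zero]
    have cs : Y (k + 1) ^ 2 ≤ (k + 1 : ℝ) * ∑ j ∈ range (k + 1), (Y (j + 1) - Y j) ^ 2 := by
      rw [tel]
      have := sq_sum_le_card_mul_sum_sq (s := range (k + 1)) (f := fun j => Y (j + 1) - Y j)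
      simpa using this
    refine cs.trans ?_
    have h1 : ∑ j ∈ range (k + 1), (Y (j + 1) - Y j) ^ 2 ≤ S := by
      apply Finset.sum_le_sum_of_subset_of_nonneg
      · exact Finset.range_subset_range.mpr (by omega)
      · intro j _ _; exact sq_nonneg _
    have h2 : (k + 1 : ℝ) ≤ (N + 1 : ℝ) := by
      have : (k : ℝ) ≤ N := Nat.cast_le.mpr hk'.le
      linarith
    calc (k + 1 : ℝ) * ∑ j ∈ range (k + 1), (Y (j + 1) - Y j) ^ 2
        ≤ (k + 1 : ℝ) * S := by
          apply mul_le_mul_of_nonneg_left h1 (by positivity)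
      _ ≤ (N + 1 : ℝ) * S := mul_le_mul_of_nonneg_right h2 hSnn
  calc ∑ k ∈ range N, Y (k + 1) ^ 2 ≤ ∑ _k ∈ range N, (N + 1 : ℝ) * S :=
        Finset.sum_le_sum key
    _ = (N : ℝ) * ((N + 1) * S) := by rw [Finset.sum_const, card_range]; push_cast [nsmul_eq_mul]; ring
    _ ≤ (N + 1 : ℝ) ^ 2 * S := by nlinarith [hSnn, (Nat.cast_nonneg N : (0:ℝ) ≤ N)]

theorem discrete_poincare (L : ℝ) (hL : 0 < L) :
    ∃ C > 0, ∀ (N : ℕ) (y : Fin (N + 2) → ℝ),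
      y 0 = 0 → y (Fin.last (N + 1)) = 0 →
      (L / (N + 1)) * ∑ k : Fin N, (y k.succ.castSucc) ^ 2
          ≤ C * ((L / (N + 1)) * ∑ k : Fin N,
              (-((y k.succ.succ - 2 * y k.succ.castSucc + y k.castSucc.castSucc)
                  / (L / (N + 1)) ^ 2)) * y k.succ.castSucc)
      ∧ (L / (N + 1)) * ∑ k : Fin N, (y k.succ.castSucc) ^ 2
          ≤ C * ((L / (N + 1)) * ∑ j : Fin (N + 1),
              ((y j.succ - y j.castSucc) / (L / (N + 1))) ^ 2) := by
  refine ⟨L ^ 2, by positivity, fun N y h0 hN => ?_⟩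
  set h : ℝ := L / (N + 1) with hh
  have hNpos : (0 : ℝ) < (N : ℝ) + 1 := by positivity
  have hpos : 0 < h := by positivity
  have hhL : h * ((N : ℝ) + 1) = L := by rw [hh]; field_simp
  -- extend y to ℕ
  set Y : ℕ → ℝ := fun n => if hn : n < N + 2 then y ⟨n, hn⟩ else 0 with hY
  have hYval : ∀ (n : ℕ) (hn : n < N + 2), Y n = y ⟨n, hn⟩ := fun n hn => dif_pos hn
  have hY0 : Y 0 = 0 := by rw [hYval 0 (by omega)]; exact h0
  have hYN : Y (N + 1) = 0 := by
    rw [hYval (N + 1) (by omega)]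
    have : (⟨N + 1, by omega⟩ : Fin (N + 2)) = Fin.last (N + 1) := rfl
    rw [this]; exact hN
  have hk1 : ∀ k : Fin N, y k.succ.castSucc = Y (k + 1) := fun k => by
    rw [hYval (k + 1) (by omega)]
    exact congrArg y (Fin.ext (by simp only [Fin.coe_castSucc, Fin.val_succ]))
  have hk2 : ∀ k : Fin N, y k.succ.succ = Y (k + 2) := fun k => by
    rw [hYval (k + 2) (by omega)]
    exact congrArg y (Fin.ext (by simp only [Fin.val_succ]))
  have hk0 : ∀ k : Fin N, y k.castSucc.castSucc = Y k := fun k => by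
    rw [hYval k (by omega)]
    exact congrArg y (Fin.ext (by simp only [Fin.coe_castSucc]))
  have hj1 : ∀ j : Fin (N + 1), y j.succ = Y (j + 1) := fun j => by
    rw [hYval (j + 1) (by omega)]
    exact congrArg y (Fin.ext (by simp only [Fin.val_succ]))
  have hj0 : ∀ j : Fin (N + 1), y j.castSucc = Y j := fun j => by
    rw [hYval j (by omega)]
    exact congrArg y (Fin.ext (by simp only [Fin.coe_castSucc]))
  set S : ℝ := ∑ j ∈ range (N + 1), (Y (j + 1) - Y j) ^ 2 with hSdef
  set A : ℝ := ∑ k ∈ range N, Y (k + 1) ^ 2 with hAdef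
  have hSnn : 0 ≤ S := Finset.sum_nonneg fun j _ => sq_nonneg _
  -- translate the sums
  have eA : ∑ k : Fin N, (y k.succ.castSucc) ^ 2 = A := by
    rw [hAdef, ← Fin.sum_univ_eq_sum_range (fun k => Y (k + 1) ^ 2) N]
    exact Finset.sum_congr rfl fun k _ => by rw [hk1 k]
  have eB : ∑ k : Fin N,
      (-((y k.succ.succ - 2 * y k.succ.castSucc + y k.castSucc.castSucc) / h ^ 2))
        * y k.succ.castSucc = S / h ^ 2 := by
    have : ∑ k : Fin N,
        (-((y k.succ.succ - 2 * y k.succ.castSucc + y k.castSucc.castSucc) / h ^ 2))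
          * y k.succ.castSucc
        = ∑ k ∈ range N, (2 * Y (k + 1) - Y (k + 2) - Y k) * Y (k + 1) / h ^ 2 := by
      rw [← Fin.sum_univ_eq_sum_range
        (fun k => (2 * Y (k + 1) - Y (k + 2) - Y k) * Y (k + 1) / h ^ 2) N]
      exact Finset.sum_congr rfl fun k _ => by rw [hk1 k, hk2 k, hk0 k]; ring
    rw [this, ← Finset.sum_div, sbp N Y hY0 hYN]
  have eC : ∑ j : Fin (N + 1), ((y j.succ - y j.castSucc) / h) ^ 2 = S / h ^ 2 := by
    have : ∑ j : Fin (N + 1), ((y j.succ - y j.castSucc) / h) ^ 2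
        = ∑ j ∈ range (N + 1), (Y (j + 1) - Y j) ^ 2 / h ^ 2 := by
      rw [← Fin.sum_univ_eq_sum_range (fun j => (Y (j + 1) - Y j) ^ 2 / h ^ 2) (N + 1)]
      exact Finset.sum_congr rfl fun j _ => by rw [hj1 j, hj0 j]; ring
    rw [this, ← Finset.sum_div]
  -- main estimate
  have hmain : h * A ≤ L ^ 2 * (h * (S / h ^ 2)) := by
    have hp := poin N Y hY0
    have h1 : h * A ≤ h * (((N : ℝ) + 1) ^ 2 * S) :=
      mul_le_mul_of_nonneg_left hp hpos.le
    have h2 : h * (((N : ℝ) + 1) ^ 2 * S) = L ^ 2 * (h * (S / h ^ 2)) := by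
      have : L ^ 2 = h ^ 2 * ((N : ℝ) + 1) ^ 2 := by rw [← hhL]; ring
      rw [this]; field_simp
    linarith
  rw [eA, eB, eC]
  exact ⟨hmain, hmain⟩
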